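/- Let 0 < a < b and n ≥ 1. If x₀ < x₁ < ⋯ < x_n are points of a Chebyshev alternance for p_{n,a,b} − 1 (i.e. |p_{n,a,b}(x_j) − 1| = ε(n,a,b) for all j with alternating signs), then x₀ = a and x_n = b. -/

import Mathlib

/-- `oddPoly n α` is the odd polynomial `α 0 * x + α 1 * x^3 + ⋯ + α (n-1) * x^(2n-1)`.
The functions of this form are exactly the elements of the space `L_n` of odd
polynomials of degree at most `2n-1`. -/
noncomputable def oddPoly (n : ℕ) (α : ℕ → ℝ) : ℝ → ℝ :=
  fun x => ∑ i ∈ Finset.range n, α i * x ^ (2 * i + 1)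

/-- The uniform (Chebyshev) distance `‖f − g‖_{C[a,b]} = sup_{x ∈ [a,b]} |f x − g x|`. -/
noncomputable def unifErr (a b : ℝ) (f g : ℝ → ℝ) : ℝ :=
  sSup ((fun x => |f x - g x|) '' Set.Icc a b)

open Finset Polynomial

lemma oddPoly_hasDerivAt (n : ℕ) (α : ℕ → ℝ) (x : ℝ) :
    HasDerivAt (fun y => oddPoly n α y - 1)
      (∑ i ∈ Finset.range n, (2 * (i:ℝ) + 1) * α i * x ^ (2 * i)) x := by
  have h : HasDerivAt (fun y => ∑ i ∈ Finset.range n, α i * y ^ (2 * i + 1))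
      (∑ i ∈ Finset.range n, (2 * (i:ℝ) + 1) * α i * x ^ (2 * i)) x := by
    apply HasDerivAt.fun_sum
    intro i _
    have := (hasDerivAt_pow (2 * i + 1) x).const_mul (α i)
    convert this using 1
    · rfl
    have h2 : 2 * i + 1 - 1 = 2 * i := rfl
    rw [h2]; push_cast; ring
  simpa [oddPoly] using h.sub_const 1


/-- If `x₀ < ⋯ < x_n` form a Chebyshev alternance for `p_{n,a,b} − 1`
(where `p_{n,a,b}` is the best odd polynomial approximation of the constant `1` on
`[a,b]`), then `x₀ = a` and `x_n = b`. -/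
theorem alternance_endpoints (n : ℕ) (hn : 1 ≤ n) (a b : ℝ) (ha : 0 < a) (hab : a < b)
    (α : ℕ → ℝ)
    (hbest : ∀ β : ℕ → ℝ,
      unifErr a b (fun _ => (1:ℝ)) (oddPoly n α) ≤ unifErr a b (fun _ => (1:ℝ)) (oddPoly n β))
    (x : Fin (n + 1) → ℝ) (hmono : StrictMono x) (hmem : ∀ j, x j ∈ Set.Icc a b)
    (habs : ∀ j, |oddPoly n α (x j) - 1| = unifErr a b (fun _ => (1:ℝ)) (oddPoly n α))
    (halt : ∀ j : Fin n,
      oddPoly n α (x j.succ) - 1 = -(oddPoly n α (x j.castSucc) - 1)) :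
    x 0 = a ∧ x (Fin.last n) = b := by
  set f : ℝ → ℝ := fun y => oddPoly n α y - 1 with hf
  set ε : ℝ := unifErr a b (fun _ => (1:ℝ)) (oddPoly n α) with hε
  -- upper bound: |f y| ≤ ε on [a,b]
  have hcont : Continuous (fun y => |f y|) := by
    apply Continuous.abs
    apply Continuous.sub _ continuous_const
    unfold oddPoly
    exact continuous_finset_sum _ fun i _ => continuous_const.mul (continuous_pow _)
  have hub : ∀ y ∈ Set.Icc a b, |f y| ≤ ε := by
    intro y hy
    have hbdd : BddAbove ((fun y => |f y|) '' Set.Icc a b) :=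
      (isCompact_Icc.image hcont).bddAbove
    have : |f y| ∈ (fun y => |f y|) '' Set.Icc a b := ⟨y, hy, rfl⟩
    have := le_csSup hbdd this
    simpa [hε, unifErr, hf, abs_sub_comm] using this
  -- some coefficient is nonzero
  have hne : ∃ i ∈ Finset.range n, α i ≠ 0 := by
    by_contra h
    push_neg at h
    have hz : ∀ y : ℝ, oddPoly n α y = 0 := by
      intro y
      unfold oddPoly
      exact Finset.sum_eq_zero fun i hi => by rw [h i hi]; ring
    have := halt ⟨0, hn⟩
    rw [hz, hz] at this
    norm_num at this
  obtain ⟨i0, hi0, hαi0⟩ := hne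
  -- the polynomial r with r(x²) = p'(x)
  set r : Polynomial ℝ := ∑ i ∈ Finset.range n, C ((2 * (i:ℝ) + 1) * α i) * X ^ i with hr
  have hrcoeff : ∀ i ∈ Finset.range n, r.coeff i = (2 * (i:ℝ) + 1) * α i := by
    intro i hi
    rw [hr, Polynomial.finset_sum_coeff]
    rw [Finset.sum_eq_single i]
    · rw [Polynomial.coeff_C_mul, Polynomial.coeff_X_pow]; simp
    · intro j _ hji
      rw [Polynomial.coeff_C_mul, Polynomial.coeff_X_pow, if_neg (Ne.symm hji), mul_zero]
    · intro h; exact absurd hi h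
  have hr0 : r ≠ 0 := by
    intro h
    have := hrcoeff i0 hi0
    rw [h] at this
    simp at this
    rcases this with h1 | h1
    · have : (0:ℝ) ≤ 2 * (i0:ℝ) := by positivity
      linarith
    · exact hαi0 h1
  have hrdeg : r.natDegree ≤ n - 1 := by
    apply Polynomial.natDegree_sum_le_of_forall_le
    intro i hi
    calc (C ((2 * (i:ℝ) + 1) * α i) * X ^ i).natDegree ≤ (X ^ i : Polynomial ℝ).natDegree :=
          Polynomial.natDegree_C_mul_le _ _
      _ = i := Polynomial.natDegree_X_pow i
      _ ≤ n - 1 := Nat.le_pred_of_lt (Finset.mem_range.mp hi)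
  -- interior alternance points give roots of r
  have hroot : ∀ j : Fin (n + 1), x j ∈ Set.Ioo a b → r.eval ((x j) ^ 2) = 0 := by
    intro j hj
    have hd := oddPoly_hasDerivAt n α (x j)
    have heps : 0 ≤ ε := by rw [← habs 0]; exact abs_nonneg _
    have hnhds : Set.Ioo a b ∈ nhds (x j) := Ioo_mem_nhds hj.1 hj.2
    have hderiv0 : (∑ i ∈ Finset.range n, (2 * (i:ℝ) + 1) * α i * (x j) ^ (2 * i)) = 0 := by
      rcases (abs_eq heps).mp (habs j) with hcase | hcase
      · -- local max
        have hmax : IsLocalMax f (x j) := by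
          apply Filter.eventually_of_mem hnhds
          intro y hy
          have := hub y (Set.mem_Icc_of_Ioo hy)
          calc f y ≤ |f y| := le_abs_self _
            _ ≤ ε := this
            _ = f (x j) := hcase.symm
        exact hmax.hasDerivAt_eq_zero hd
      · -- local min
        have hmin : IsLocalMin f (x j) := by
          apply Filter.eventually_of_mem hnhds
          intro y hy
          have := hub y (Set.mem_Icc_of_Ioo hy)
          calc f (x j) = -ε := hcase
            _ ≤ -|f y| := by linarith
            _ ≤ f y := neg_abs_le _
        exact hmin.hasDerivAt_eq_zero hd
    rw [hr]
    rw [Polynomial.eval_finset_sum]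
    rw [← hderiv0]
    apply Finset.sum_congr rfl
    intro i _
    simp [pow_mul]
  -- squares of interior points are distinct roots of r: at most n-1 of them
  have key : ∀ (e : Fin n → Fin (n + 1)), (Function.Injective e) →
      (∀ j, x (e j) ∈ Set.Ioo a b) → False := by
    intro e he hint
    have hxpos : ∀ j : Fin (n+1), 0 < x j := fun j => lt_of_lt_of_le ha (hmem j).1
    have hinj : Function.Injective (fun j : Fin n => (x (e j)) ^ 2) := by
      intro j k hjk
      apply he
      apply hmono.injective
      have h1 := hxpos (e j)
      have h2 := hxpos (e k)
      have hjk' : x (e j) ^ 2 = x (e k) ^ 2 := hjk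
      nlinarith [hjk', h1, h2]
    have hsub : Finset.image (fun j : Fin n => (x (e j)) ^ 2) Finset.univ ⊆ r.roots.toFinset := by
      intro t ht
      obtain ⟨j, _, rfl⟩ := Finset.mem_image.mp ht
      rw [Multiset.mem_toFinset, Polynomial.mem_roots hr0]
      exact hroot (e j) (hint j)
    have hcard := Finset.card_le_card hsub
    rw [Finset.card_image_of_injective _ hinj, Finset.card_univ, Fintype.card_fin] at hcard
    have h1 : r.roots.toFinset.card ≤ Multiset.card r.roots := Multiset.toFinset_card_le _
    have h2 : Multiset.card r.roots ≤ r.natDegree := Polynomial.card_roots' r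
    omega
  constructor
  · by_contra h0
    have h0' : a < x 0 := lt_of_le_of_ne (hmem 0).1 (Ne.symm h0)
    apply key (Fin.castSucc) (Fin.castSucc_injective n)
    intro j
    constructor
    · exact lt_of_lt_of_le h0' (hmono.monotone (Fin.zero_le _))
    · exact lt_of_lt_of_le (hmono (Fin.castSucc_lt_last j)) (hmem (Fin.last n)).2
  · by_contra h0
    have h0' : x (Fin.last n) < b := lt_of_le_of_ne (hmem (Fin.last n)).2 h0
    apply key (Fin.succ) (Fin.succ_injective n)
    intro j
    constructor
    · exact lt_of_le_of_lt (hmem 0).1 (hmono (Fin.succ_pos j))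
    · exact lt_of_le_of_lt (hmono.monotone (Fin.le_last _)) h0'
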